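/- arXiv:1704.06943 — 2 statements merged into one kernel-verified Lean document; each statement's English description precedes it below -/
import Mathlib

section
/- Let a, b, s be natural numbers with a ≥ b ≥ s ≥ 1. Then a^a · b^b < (a+s)^{a+s} · (b−s)^{b−s}, with the convention 0^0 = 1. -/
/-- Bernoulli-type inequality in ℕ: `(m+1)^k * (m-k) ≤ m^(k+1)` for `k ≤ m`. -/
lemma bern_aux (m : ℕ) : ∀ k, k ≤ m → (m + 1) ^ k * (m - k) ≤ m ^ (k + 1) := by
  intro k
  induction k with
  | zero => intro _; simp
  | succ k ih =>
    intro hk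
    have hk' : k ≤ m := Nat.le_of_succ_le hk
    have h1 : (m + 1) ^ k * (m - k) * m ≤ m ^ (k + 1) * m :=
      Nat.mul_le_mul_right m (ih hk')
    have key : (m + 1) ^ (k + 1) * (m - (k + 1)) ≤ (m + 1) ^ k * (m - k) * m := by
      obtain ⟨d, hd⟩ := Nat.exists_eq_add_of_le hk
      have h2 : (m + 1) * (m - (k + 1)) ≤ (m - k) * m := by
        subst hd
        have e1 : k + 1 + d - (k + 1) = d := by omega
        have e2 : k + 1 + d - k = d + 1 := by omega
        rw [e1, e2]
        nlinarith
      calc (m + 1) ^ (k + 1) * (m - (k + 1))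
          = (m + 1) ^ k * ((m + 1) * (m - (k + 1))) := by ring
        _ ≤ (m + 1) ^ k * ((m - k) * m) := Nat.mul_le_mul_left _ h2
        _ = (m + 1) ^ k * (m - k) * m := by ring
    calc (m + 1) ^ (k + 1) * (m - (k + 1)) ≤ (m + 1) ^ k * (m - k) * m := key
      _ ≤ m ^ (k + 1) * m := h1
      _ = m ^ (k + 2) := by ring

/-- Core step: `(n+1)^(2n+1) ≤ (n+2)^(n+1) * n^n` for `n ≥ 1`. -/
lemma core_aux (n : ℕ) (hn : 1 ≤ n) : (n + 1) ^ (2 * n + 1) ≤ (n + 2) ^ (n + 1) * n ^ n := by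
  have hb := bern_aux (n * (n + 2)) n (Nat.le_mul_of_pos_right n (by omega))
  have e1 : n * (n + 2) + 1 = (n + 1) ^ 2 := by ring
  have e2 : n * (n + 2) - n = n * (n + 1) := by
    have : n * (n + 2) = n * (n + 1) + n := by ring
    omega
  rw [e1, e2] at hb
  have e3 : (n * (n + 2)) ^ (n + 1) = n ^ (n + 1) * (n + 2) ^ (n + 1) := by
    rw [Nat.mul_pow]
  rw [e3] at hb
  have e4 : ((n + 1) ^ 2) ^ n * (n * (n + 1)) = (n + 1) ^ (2 * n + 1) * n := by
    rw [← pow_mul]; ring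
  rw [e4] at hb
  have e5 : n ^ (n + 1) * (n + 2) ^ (n + 1) = (n + 2) ^ (n + 1) * n ^ n * n := by
    rw [pow_succ]; ring
  rw [e5] at hb
  exact Nat.le_of_mul_le_mul_right hb (by omega)

/-- Monotonicity of `(1+1/n)^n` in cross-multiplied form:
for `1 ≤ m ≤ n`, `(m+1)^m * n^n ≤ (n+1)^n * m^m`. -/
lemma mono_aux (m : ℕ) (hm : 1 ≤ m) : ∀ n, m ≤ n → (m + 1) ^ m * n ^ n ≤ (n + 1) ^ n * m ^ m := by
  intro n hn
  induction n, hn using Nat.le_induction with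
  | base => exact le_of_eq (by ring)
  | succ n hn ih =>
    have hn1 : 1 ≤ n := le_trans hm hn
    have hcore := core_aux n hn1
    have hnpos : 0 < n ^ n := Nat.pow_pos (by omega)
    have hkey : (m + 1) ^ m * (n + 1) ^ (n + 1) * n ^ n ≤
        (n + 1 + 1) ^ (n + 1) * m ^ m * n ^ n := calc (m + 1) ^ m * (n + 1) ^ (n + 1) * n ^ n
        = (n + 1) ^ (n + 1) * ((m + 1) ^ m * n ^ n) := by ring
      _ ≤ (n + 1) ^ (n + 1) * ((n + 1) ^ n * m ^ m) := Nat.mul_le_mul_left _ ih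
      _ = (n + 1) ^ (2 * n + 1) * m ^ m := by
            rw [← mul_assoc, ← pow_add, show n + 1 + n = 2 * n + 1 from by omega]
      _ ≤ (n + 2) ^ (n + 1) * n ^ n * m ^ m := Nat.mul_le_mul_right _ hcore
      _ = (n + 1 + 1) ^ (n + 1) * m ^ m * n ^ n := by ring
    exact Nat.le_of_mul_le_mul_right hkey hnpos

/-- Single step: for `a ≥ b ≥ 1`, `a^a * b^b < (a+1)^(a+1) * (b-1)^(b-1)`. -/
lemma step_aux (a b : ℕ) (hb : 1 ≤ b) (hba : b ≤ a) :
    a ^ a * b ^ b < (a + 1) ^ (a + 1) * (b - 1) ^ (b - 1) := by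
  obtain ⟨m, rfl⟩ : ∃ m, b = m + 1 := ⟨b - 1, by omega⟩
  simp only [Nat.add_sub_cancel]
  rcases Nat.eq_zero_or_pos m with rfl | hm
  · -- b = 1 : need a^a * 1 < (a+1)^(a+1) * 1
    norm_num
    calc a ^ a ≤ (a + 1) ^ a := Nat.pow_le_pow_left (by omega) a
      _ < (a + 1) ^ (a + 1) := Nat.pow_lt_pow_right (by omega) (by omega)
  · have hmono := mono_aux m hm a (by omega)
    have hapos : 0 < (a + 1) ^ a * m ^ m :=
      Nat.mul_pos (Nat.pow_pos (by omega)) (Nat.pow_pos (by omega))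
    calc a ^ a * (m + 1) ^ (m + 1)
        = (m + 1) ^ m * a ^ a * (m + 1) := by ring
      _ ≤ (a + 1) ^ a * m ^ m * (m + 1) := Nat.mul_le_mul_right _ (by linarith [hmono])
      _ < (a + 1) ^ a * m ^ m * (a + 1) :=
          mul_lt_mul_of_pos_left (show m + 1 < a + 1 by omega) hapos
      _ = (a + 1) ^ (a + 1) * m ^ m := by rw [pow_succ]; ring

/-- The key numerical inequality in Lemma 4 (Wang): for natural numbers
`a ≥ b ≥ s ≥ 1` one has `a^a * b^b < (a+s)^(a+s) * (b-s)^(b-s)`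
(with the natural-number convention `0^0 = 1`). -/
theorem pow_self_mul_pow_self_lt (a b s : ℕ) (hs : 1 ≤ s) (hsb : s ≤ b)
    (hba : b ≤ a) :
    a ^ a * b ^ b < (a + s) ^ (a + s) * (b - s) ^ (b - s) := by
  induction s, hs using Nat.le_induction generalizing a b with
  | base => exact step_aux a b hsb hba
  | succ t ht ih =>
    have h1 : a ^ a * b ^ b < (a + 1) ^ (a + 1) * (b - 1) ^ (b - 1) :=
      step_aux a b (by omega) hba
    have h2 : (a + 1) ^ (a + 1) * (b - 1) ^ (b - 1) <
        (a + 1 + t) ^ (a + 1 + t) * (b - 1 - t) ^ (b - 1 - t) :=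
      ih (a + 1) (b - 1) (by omega) (by omega)
    have e1 : a + 1 + t = a + (t + 1) := by omega
    have e2 : b - 1 - t = b - (t + 1) := by omega
    rw [e1, e2] at h2
    exact lt_trans h1 h2
end

section
/- Let n, k be natural numbers with 1 ≤ k ≤ n − 2, and let G be a connected finite simple graph on n vertices that has a vertex cut of size at most k (i.e., there is a set S of at most k vertices such that the subgraph of G induced on the complement of S is disconnected). Then Π₂(G) ≤ k^k · (n−1)^{k(n−1)} · (n−2)^{(n−2)(n−k−1)}, and equality holds if and only if G is isomorphic to K_n^k. -/
open Real Set

/-- The second multiplicative Zagreb index `Π₂(G) = ∏_{u ∈ V(G)} d(u)^{d(u)}`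
(with the natural-number convention `0^0 = 1`). -/
noncomputable def multZagreb2 {V : Type*} [Fintype V] (G : SimpleGraph V) : ℕ :=
  letI := Classical.decRel G.Adj
  ∏ v : V, (G.degree v) ^ (G.degree v)

/-- The graph `K_n^k`: the complete graph `K_{n-1}` (on the vertices `some a`)
together with one extra vertex (`none`) joined to exactly `k` vertices of
`K_{n-1}`. -/
def Knk (n k : ℕ) : SimpleGraph (Option (Fin (n - 1))) :=
  SimpleGraph.fromRel (fun x y =>
    match x, y with
    | some _, some _ => True
    | none, some a => (a : ℕ) < k
    | some a, none => (a : ℕ) < k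
    | none, none => False)


private noncomputable def Ffun (c : ℝ) : ℝ → ℝ := fun x => (x^2 + (1-c)*x) * Real.log x
private noncomputable def Fder (c : ℝ) : ℝ → ℝ := fun x => (2*x + 1 - c) * Real.log x + (x + 1 - c)

private lemma hasDerivAt_Ffun (c : ℝ) {x : ℝ} (hx : 0 < x) :
    HasDerivAt (Ffun c) (Fder c x) x := by
  have h1 : HasDerivAt (fun x : ℝ => x^2 + (1-c)*x) (2*x + (1-c)) x := by
    exact ((hasDerivAt_pow 2 x).add ((hasDerivAt_id x).const_mul (1-c))).congr_deriv (by norm_num)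
  have h2 := Real.hasDerivAt_log hx.ne'
  have := h1.mul h2
  refine this.congr_deriv ?_
  unfold Fder
  field_simp
  ring

private lemma hasDerivAt_Fder (c : ℝ) {x : ℝ} (hx : 0 < x) :
    HasDerivAt (Fder c) (2 * Real.log x + (2*x + 1 - c) * x⁻¹ + 1) x := by
  have h1 : HasDerivAt (fun x : ℝ => 2*x + 1 - c) 2 x := by
    simpa using (((hasDerivAt_id x).const_mul (2:ℝ)).add_const 1).sub_const c
  have h2 := Real.hasDerivAt_log hx.ne'
  have h3 := h1.mul h2
  have h4 : HasDerivAt (fun x : ℝ => x + 1 - c) 1 x := by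
    simpa using ((hasDerivAt_id x).add_const 1).sub_const c
  exact h3.add h4

private lemma strictMonoOn_Fder (c : ℝ) (hc : 1 ≤ c) :
    StrictMonoOn (Fder c) (Ici c) := by
  have hcpos : (0:ℝ) < c := lt_of_lt_of_le one_pos hc
  apply strictMonoOn_of_deriv_pos (convex_Ici c)
  · intro x hx
    exact ((hasDerivAt_Fder c (lt_of_lt_of_le hcpos hx)).continuousAt).continuousWithinAt
  · intro x hx
    rw [interior_Ici, mem_Ioi] at hx
    have hx1 : (1:ℝ) < x := lt_of_le_of_lt hc hx
    have hxpos : (0:ℝ) < x := lt_trans one_pos hx1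
    rw [(hasDerivAt_Fder c hxpos).deriv]
    have hlog : 0 < Real.log x := Real.log_pos hx1
    have h2 : 0 < (2*x + 1 - c) * x⁻¹ := by
      apply mul_pos _ (inv_pos.mpr hxpos)
      linarith
    linarith

private lemma key_real (c p q : ℝ) (hc : 1 ≤ c) (hp : c + 1 ≤ p) (hpq : p ≤ q) :
    Ffun c p + Ffun c q < Ffun c (p-1) + Ffun c (q+1) := by
  have hcpos : (0:ℝ) < c := lt_of_lt_of_le one_pos hc
  have hp1 : c ≤ p - 1 := by linarith
  have hppos : (0:ℝ) < p - 1 := by linarith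
  have hmvt1 : ∃ ξ ∈ Ioo (p-1) p, Fder c ξ = (Ffun c p - Ffun c (p-1)) / (p - (p-1)) := by
    apply exists_hasDerivAt_eq_slope (Ffun c) (Fder c) (by linarith)
    · intro x hx
      exact ((hasDerivAt_Ffun c (by rcases hx with ⟨h1,h2⟩; linarith)).continuousAt).continuousWithinAt
    · intro x hx
      exact hasDerivAt_Ffun c (by rcases hx with ⟨h1,h2⟩; linarith)
  have hmvt2 : ∃ ξ ∈ Ioo q (q+1), Fder c ξ = (Ffun c (q+1) - Ffun c q) / ((q+1) - q) := by
    apply exists_hasDerivAt_eq_slope (Ffun c) (Fder c) (by linarith)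
    · intro x hx
      exact ((hasDerivAt_Ffun c (by rcases hx with ⟨h1,h2⟩; linarith)).continuousAt).continuousWithinAt
    · intro x hx
      exact hasDerivAt_Ffun c (by rcases hx with ⟨h1,h2⟩; linarith)
  obtain ⟨ξ1, hξ1, he1⟩ := hmvt1
  obtain ⟨ξ2, hξ2, he2⟩ := hmvt2
  have h12 : ξ1 < ξ2 := by rcases hξ1 with ⟨_, h⟩; rcases hξ2 with ⟨h', _⟩; linarith
  have hm : Fder c ξ1 < Fder c ξ2 := by
    apply strictMonoOn_Fder c hc _ _ h12
    · rcases hξ1 with ⟨h, _⟩; exact mem_Ici.mpr (by linarith)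
    · rcases hξ2 with ⟨h, _⟩; exact mem_Ici.mpr (by linarith)
  rw [he1, he2] at hm
  have e1 : p - (p-1) = 1 := by ring
  have e2 : (q+1) - q = 1 := by ring
  rw [e1, e2, div_one, div_one] at hm
  linarith

/-- `g k a = (k+a)^((k+a)(a+1))`, the Π₂-contribution of a clique side of size `a+1`
over a cut of size `k`. -/
def gfun (k a : ℕ) : ℕ := (k+a)^((k+a)*(a+1))

private lemma gfun_pos {k a : ℕ} (hk : 1 ≤ k) : 0 < gfun k a :=
  Nat.pow_pos (by omega)

private lemma gfun_step (k a b : ℕ) (hk : 1 ≤ k) (hab : a + 1 ≤ b) :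
    gfun k (a+1) * gfun k b < gfun k a * gfun k (b+1) := by
  have key := key_real (k:ℝ) ((k:ℝ)+(a:ℝ)+1) ((k:ℝ)+(b:ℝ)) (by exact_mod_cast hk)
    (by linarith [Nat.cast_nonneg (α := ℝ) a]) (by
      have : (a:ℝ) + 1 ≤ (b:ℝ) := by exact_mod_cast hab
      linarith)
  have hx1 : (0:ℝ) < ((k+a+1 : ℕ) : ℝ) := by positivity
  have hx2 : (0:ℝ) < ((k+b : ℕ) : ℝ) := by exact_mod_cast (by omega : 0 < k + b)
  have hx3 : (0:ℝ) < ((k+a : ℕ) : ℝ) := by exact_mod_cast (by omega : 0 < k + a)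
  have hx4 : (0:ℝ) < ((k+b+1 : ℕ) : ℝ) := by positivity
  have e1 : Ffun (k:ℝ) ((k:ℝ)+(a:ℝ)+1) = ((k+a+1)*(a+2) : ℕ) * Real.log ((k+a+1 : ℕ)) := by
    unfold Ffun; push_cast; ring
  have e2 : Ffun (k:ℝ) ((k:ℝ)+(b:ℝ)) = ((k+b)*(b+1) : ℕ) * Real.log ((k+b : ℕ)) := by
    unfold Ffun; push_cast; ring
  have e3 : Ffun (k:ℝ) ((k:ℝ)+(a:ℝ)+1-1) = ((k+a)*(a+1) : ℕ) * Real.log ((k+a : ℕ)) := by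
    unfold Ffun; push_cast; ring
  have e4 : Ffun (k:ℝ) ((k:ℝ)+(b:ℝ)+1) = ((k+b+1)*(b+2) : ℕ) * Real.log ((k+b+1 : ℕ)) := by
    unfold Ffun; push_cast; ring
  rw [e1, e2, e3, e4] at key
  have hlog : Real.log (((k+a+1 : ℕ):ℝ)^((k+a+1)*(a+2)) * ((k+b : ℕ):ℝ)^((k+b)*(b+1)))
      < Real.log (((k+a : ℕ):ℝ)^((k+a)*(a+1)) * ((k+b+1 : ℕ):ℝ)^((k+b+1)*(b+2))) := by
    rw [Real.log_mul (pow_pos hx1 _).ne' (pow_pos hx2 _).ne',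
      Real.log_mul (pow_pos hx3 _).ne' (pow_pos hx4 _).ne',
      Real.log_pow, Real.log_pow, Real.log_pow, Real.log_pow]
    exact key
  have hR := (Real.log_lt_log_iff (mul_pos (pow_pos hx1 _) (pow_pos hx2 _))
    (mul_pos (pow_pos hx3 _) (pow_pos hx4 _))).mp hlog
  have : ((gfun k (a+1) * gfun k b : ℕ) : ℝ) < ((gfun k a * gfun k (b+1) : ℕ) : ℝ) := by
    unfold gfun
    push_cast
    convert hR using 2 <;> push_cast <;> ring
  exact_mod_cast this


private lemma gfun_chain (k : ℕ) (hk : 1 ≤ k) :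
    ∀ a b, a ≤ b → gfun k a * gfun k b ≤ gfun k 0 * gfun k (a+b) ∧
      (1 ≤ a → gfun k a * gfun k b < gfun k 0 * gfun k (a+b)) := by
  intro a
  induction a with
  | zero => intro b _; exact ⟨by rw [Nat.zero_add], fun h => absurd h (by omega)⟩
  | succ n ih =>
    intro b h
    have hstep := gfun_step k n b hk h
    have hih := (ih (b+1) (by omega)).1
    have heq : n + (b+1) = (n+1) + b := by omega
    rw [heq] at hih
    exact ⟨le_trans (le_of_lt hstep) hih, fun _ => lt_of_lt_of_le hstep hih⟩

lemma gfun_le (k a b : ℕ) (hk : 1 ≤ k) :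
    gfun k a * gfun k b ≤ gfun k 0 * gfun k (a+b) := by
  rcases le_total a b with h | h
  · exact (gfun_chain k hk a b h).1
  · rw [mul_comm (gfun k a), Nat.add_comm a b]
    exact (gfun_chain k hk b a h).1

lemma gfun_lt (k a b : ℕ) (hk : 1 ≤ k) (ha : 1 ≤ a) (hb : 1 ≤ b) :
    gfun k a * gfun k b < gfun k 0 * gfun k (a+b) := by
  rcases le_total a b with h | h
  · exact (gfun_chain k hk a b h).2 ha
  · rw [mul_comm (gfun k a), Nat.add_comm a b]
    exact (gfun_chain k hk b a h).2 hb

lemma xx_mono {x y : ℕ} (h : x ≤ y) : x^x ≤ y^y := by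
  rcases Nat.eq_zero_or_pos y with hy | hy
  · subst hy; simp_all
  · calc x^x ≤ y^x := Nat.pow_le_pow_left h x
      _ ≤ y^y := Nat.pow_le_pow_right hy h

lemma xx_strictmono {x y : ℕ} (hx : 1 ≤ x) (h : x < y) : x^x < y^y := by
  have h2 : 2 ≤ y := by omega
  calc x^x ≤ y^x := Nat.pow_le_pow_left (le_of_lt h) x
    _ < y^y := Nat.pow_lt_pow_right (by omega) h

lemma xx_inj {x y : ℕ} (hx : 1 ≤ x) (hxy : x ≤ y) (h : x^x = y^y) : x = y := by
  by_contra hne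
  exact absurd h (Nat.ne_of_lt (xx_strictmono hx (lt_of_le_of_ne hxy hne)))


private lemma pow_self_pos (d : ℕ) : 0 < d ^ d := by
  cases d with
  | zero => simp
  | succ m => exact pow_pos (Nat.succ_pos m) _

private lemma pair_eq {x1 x2 y1 y2 : ℕ} (h1 : x1 ≤ y1) (h2 : x2 ≤ y2)
    (p1 : 0 < x1) (p2 : 0 < x2) (h : x1 * x2 = y1 * y2) : x1 = y1 ∧ x2 = y2 := by
  have k1 : x1 = y1 := by
    by_contra hne
    have hlt : x1 < y1 := lt_of_le_of_ne h1 hne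
    have : x1 * x2 < y1 * y2 :=
      Nat.mul_lt_mul_of_lt_of_le hlt h2 (lt_of_lt_of_le p2 h2)
    omega
  refine ⟨k1, ?_⟩
  subst k1
  exact Nat.eq_of_mul_eq_mul_left p1 h

private lemma triple_eq {x1 x2 x3 y1 y2 y3 : ℕ} (h1 : x1 ≤ y1) (h2 : x2 ≤ y2) (h3 : x3 ≤ y3)
    (p1 : 0 < x1) (p2 : 0 < x2) (p3 : 0 < x3) (h : x1 * x2 * x3 = y1 * y2 * y3) :
    x1 = y1 ∧ x2 = y2 ∧ x3 = y3 := by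
  have h12 := pair_eq (Nat.mul_le_mul h1 h2) h3 (Nat.mul_pos p1 p2) p3 h
  have := pair_eq h1 h2 p1 p2 h12.1
  exact ⟨this.1, this.2, h12.2⟩

private lemma prod_factors_eq_of_prod_eq {ι : Type*} {s : Finset ι} {f g : ι → ℕ}
    (hle : ∀ i ∈ s, f i ≤ g i) (hpos : ∀ i ∈ s, 0 < f i)
    (heq : ∏ i ∈ s, f i = ∏ i ∈ s, g i) : ∀ i ∈ s, f i = g i := by
  classical
  intro j hj
  by_contra hne
  have hlt : f j < g j := lt_of_le_of_ne (hle j hj) hne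
  have h1 : ∏ i ∈ s, f i = f j * ∏ i ∈ s.erase j, f i := (Finset.mul_prod_erase s f hj).symm
  have h2 : ∏ i ∈ s, g i = g j * ∏ i ∈ s.erase j, g i := (Finset.mul_prod_erase s g hj).symm
  have hple : ∏ i ∈ s.erase j, f i ≤ ∏ i ∈ s.erase j, g i :=
    Finset.prod_le_prod (fun i hi => Nat.zero_le _) (fun i hi => hle i (Finset.mem_of_mem_erase hi))
  have hgpos : 0 < ∏ i ∈ s.erase j, g i := by
    apply Finset.prod_pos
    intro i hi
    exact lt_of_lt_of_le (hpos i (Finset.mem_of_mem_erase hi)) (hle i (Finset.mem_of_mem_erase hi))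
  have : ∏ i ∈ s, f i < ∏ i ∈ s, g i := by
    rw [h1, h2]
    calc f j * ∏ i ∈ s.erase j, f i ≤ f j * ∏ i ∈ s.erase j, g i := Nat.mul_le_mul_left _ hple
      _ < g j * ∏ i ∈ s.erase j, g i := Nat.mul_lt_mul_of_lt_of_le hlt (le_refl _) hgpos
  omega

lemma Knk_adj (n k : ℕ) (x y : Option (Fin (n-1))) :
    (Knk n k).Adj x y ↔ x ≠ y ∧ ¬(x = none ∧ ∃ a, y = some a ∧ k ≤ (a:ℕ)) ∧
      ¬(y = none ∧ ∃ a, x = some a ∧ k ≤ (a:ℕ)) := by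
  rw [Knk, SimpleGraph.fromRel_adj]
  rcases x with _ | a <;> rcases y with _ | b <;> simp

lemma card_filter_fin_lt {m k : ℕ} (h : k ≤ m) :
    (Finset.univ.filter (fun i : Fin m => (i : ℕ) < k)).card = k := by
  have : Finset.univ.filter (fun i : Fin m => (i : ℕ) < k)
      = (Finset.univ : Finset (Fin k)).map (Fin.castLEEmb h) := by
    ext i
    simp only [Finset.mem_filter, Finset.mem_univ, true_and, Finset.mem_map]
    constructor
    · intro hi
      exact ⟨⟨i, hi⟩, by simp [Fin.castLEEmb, Fin.castLE, Fin.ext_iff]⟩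
    · rintro ⟨j, rfl⟩
      simpa [Fin.castLEEmb, Fin.castLE] using j.2
  rw [this, Finset.card_map, Finset.card_univ, Fintype.card_fin]

section KnkDegrees

variable (n k : ℕ)

open Finset

lemma Knk_neighborFinset_none [DecidableRel (Knk n k).Adj] (hkn : k ≤ n - 2) :
    (Knk n k).neighborFinset none
      = (Finset.univ.filter (fun a : Fin (n-1) => (a:ℕ) < k)).map Function.Embedding.some := by
  ext x
  rcases x with _ | a <;>
    simp [SimpleGraph.mem_neighborFinset, Knk_adj]

lemma Knk_degree_none [DecidableRel (Knk n k).Adj] (hk : 1 ≤ k) (hkn : k ≤ n - 2) :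
    (Knk n k).degree none = k := by
  have hn : 3 ≤ n := by omega
  rw [← SimpleGraph.card_neighborFinset_eq_degree, Knk_neighborFinset_none n k hkn,
    Finset.card_map, card_filter_fin_lt (by omega)]

lemma Knk_degree_some_low [DecidableRel (Knk n k).Adj] (hk : 1 ≤ k) (hkn : k ≤ n - 2)
    (a : Fin (n-1)) (ha : (a:ℕ) < k) : (Knk n k).degree (some a) = n - 1 := by
  have hn : 3 ≤ n := by omega
  have : (Knk n k).neighborFinset (some a) = Finset.univ.erase (some a) := by
    ext x
    rcases x with _ | b
    · simp [SimpleGraph.mem_neighborFinset, Knk_adj, ha]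
    · simp [SimpleGraph.mem_neighborFinset, Knk_adj, eq_comm]
  rw [← SimpleGraph.card_neighborFinset_eq_degree, this, Finset.card_erase_of_mem (mem_univ _),
    Finset.card_univ, Fintype.card_option, Fintype.card_fin]
  omega

lemma Knk_degree_some_high [DecidableRel (Knk n k).Adj] (hk : 1 ≤ k) (hkn : k ≤ n - 2)
    (a : Fin (n-1)) (ha : ¬ (a:ℕ) < k) : (Knk n k).degree (some a) = n - 2 := by
  have hn : 3 ≤ n := by omega
  have : (Knk n k).neighborFinset (some a) = (Finset.univ.erase (some a)).erase none := by
    ext x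
    rcases x with _ | b
    · simp [SimpleGraph.mem_neighborFinset, Knk_adj, ha]
    · simp [SimpleGraph.mem_neighborFinset, Knk_adj, eq_comm]
  rw [← SimpleGraph.card_neighborFinset_eq_degree, this,
    Finset.card_erase_of_mem (by simp [Fin.ext_iff]), Finset.card_erase_of_mem (mem_univ _),
    Finset.card_univ, Fintype.card_option, Fintype.card_fin]
  omega

end KnkDegrees

lemma multZagreb2_eq_of_iso {V W : Type*} [Fintype V] [Fintype W]
    {G : SimpleGraph V} {H : SimpleGraph W} (e : G ≃g H) :
    multZagreb2 G = multZagreb2 H := by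
  letI := Classical.decRel G.Adj
  letI := Classical.decRel H.Adj
  have hdeg : ∀ v, G.degree v = H.degree (e v) := by
    intro v
    rw [← SimpleGraph.card_neighborSet_eq_degree, ← SimpleGraph.card_neighborSet_eq_degree]
    exact Fintype.card_congr (e.mapNeighborSet v)
  unfold multZagreb2
  rw [← Equiv.prod_comp e.toEquiv (fun w => (H.degree w) ^ (H.degree w))]
  exact Finset.prod_congr rfl (fun v _ => by rw [hdeg v]; rfl)

lemma multZagreb2_Knk (n k : ℕ) (hk : 1 ≤ k) (hkn : k ≤ n - 2) :
    multZagreb2 (Knk n k) = k ^ k * (n-1) ^ (k*(n-1)) * (n-2) ^ ((n-2)*(n-k-1)) := by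
  letI := Classical.decRel (Knk n k).Adj
  have hn : 3 ≤ n := by omega
  unfold multZagreb2
  rw [Fintype.prod_option]
  rw [Knk_degree_none n k hk hkn]
  have hsome : ∀ a : Fin (n-1), ((Knk n k).degree (some a)) ^ ((Knk n k).degree (some a))
      = if (a:ℕ) < k then (n-1)^(n-1) else (n-2)^(n-2) := by
    intro a
    by_cases ha : (a:ℕ) < k
    · rw [Knk_degree_some_low n k hk hkn a ha, if_pos ha]
    · rw [Knk_degree_some_high n k hk hkn a ha, if_neg ha]
  rw [Finset.prod_congr rfl (fun a _ => hsome a), Finset.prod_ite, Finset.prod_const,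
    Finset.prod_const, card_filter_fin_lt (by omega), Finset.filter_not,
    Finset.card_sdiff_of_subset (Finset.filter_subset _ _), card_filter_fin_lt (by omega),
    Finset.card_univ, Fintype.card_fin]
  rw [← pow_mul, ← pow_mul]
  have e1 : (n-1) * k = k * (n-1) := Nat.mul_comm _ _
  have e2 : (n-2) * (n-1-k) = (n-2) * (n-k-1) := by
    congr 1
    omega
  rw [e1, e2, Nat.mul_assoc]

lemma iso_of_char {V : Type*} [Fintype V] (n k : ℕ) (hk : 1 ≤ k) (hkn : k ≤ n-2)
    (G : SimpleGraph V) (hV : Fintype.card V = n) (u0 : V) (B : Finset V)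
    (hu0B : u0 ∉ B) (hcardB : B.card = n-1-k)
    (hAdj : ∀ x y, G.Adj x y ↔ (x ≠ y ∧ ¬(x = u0 ∧ y ∈ B) ∧ ¬(y = u0 ∧ x ∈ B))) :
    Nonempty (G ≃g Knk n k) := by
  classical
  have hn : 3 ≤ n := by omega
  set R : Finset V := (Finset.univ.erase u0) \ B with hR
  have hBsub : B ⊆ Finset.univ.erase u0 := by
    intro x hx
    exact Finset.mem_erase.mpr ⟨fun h => hu0B (h ▸ hx), Finset.mem_univ x⟩
  have hcardR : R.card = k := by
    rw [hR, Finset.card_sdiff_of_subset hBsub, Finset.card_erase_of_mem (Finset.mem_univ _),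
      Finset.card_univ, hV, hcardB]
    omega
  let eB : {x // x ∈ B} ≃ Fin (n-1-k) := B.equivFinOfCardEq hcardB
  let eR : {x // x ∈ R} ≃ Fin k := R.equivFinOfCardEq hcardR
  let f : V → Option (Fin (n-1)) := fun v =>
    if hv : v ∈ B then some ⟨k + (eB ⟨v, hv⟩ : ℕ), by have := (eB ⟨v, hv⟩).2; omega⟩
    else if hv' : v ∈ R then some ⟨(eR ⟨v, hv'⟩ : ℕ), by have := (eR ⟨v, hv'⟩).2; omega⟩
    else none
  have hfu0 : f u0 = none := by
    have h1 : u0 ∉ R := by simp [hR]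
    simp [f, hu0B, h1]
  have hfnone : ∀ v, f v = none ↔ v = u0 := by
    intro v
    constructor
    · intro hfv
      by_contra hne
      by_cases hv : v ∈ B
      · simp [f, hv] at hfv
      · have hv' : v ∈ R := by
          simp [hR, Finset.mem_sdiff, Finset.mem_erase, hne, hv]
        simp [f, hv, hv'] at hfv
    · rintro rfl; exact hfu0
  have hfB : ∀ v, (∃ a, f v = some a ∧ k ≤ (a:ℕ)) ↔ v ∈ B := by
    intro v
    constructor
    · rintro ⟨a, hfa, hka⟩
      by_contra hv
      by_cases hv' : v ∈ R
      · simp only [f, dif_neg hv, dif_pos hv', Option.some.injEq] at hfa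
        rw [← hfa] at hka
        simp only at hka
        have := (eR ⟨v, hv'⟩).2
        omega
      · simp [f, hv, hv'] at hfa
    · intro hv
      refine ⟨⟨k + (eB ⟨v, hv⟩ : ℕ), by have := (eB ⟨v, hv⟩).2; omega⟩, by simp [f, hv], by simp⟩
  have hinj : Function.Injective f := by
    intro x y hxy
    by_cases hx : x ∈ B <;> by_cases hy : y ∈ B
    · simp only [f, dif_pos hx, dif_pos hy, Option.some.injEq, Fin.mk.injEq] at hxy
      have : eB ⟨x, hx⟩ = eB ⟨y, hy⟩ := Fin.ext (by omega)
      have := eB.injective this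
      exact Subtype.mk_eq_mk.mp this
    · exfalso
      have h1 : ∃ a, f x = some a ∧ k ≤ (a:ℕ) := (hfB x).mpr hx
      obtain ⟨a, ha1, ha2⟩ := h1
      have h2 : ∃ a, f y = some a ∧ k ≤ (a:ℕ) := ⟨a, hxy ▸ ha1, ha2⟩
      exact hy ((hfB y).mp h2)
    · exfalso
      have h1 : ∃ a, f y = some a ∧ k ≤ (a:ℕ) := (hfB y).mpr hy
      obtain ⟨a, ha1, ha2⟩ := h1
      have h2 : ∃ a, f x = some a ∧ k ≤ (a:ℕ) := ⟨a, hxy ▸ ha1, ha2⟩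
      exact hx ((hfB x).mp h2)
    · by_cases hx' : x ∈ R <;> by_cases hy' : y ∈ R
      · simp only [f, dif_neg hx, dif_neg hy, dif_pos hx', dif_pos hy', Option.some.injEq,
          Fin.mk.injEq] at hxy
        have : eR ⟨x, hx'⟩ = eR ⟨y, hy'⟩ := Fin.ext hxy
        have := eR.injective this
        exact Subtype.mk_eq_mk.mp this
      · exfalso
        have : f x = none := by rw [hxy]; simp [f, hy, hy']
        have hxu : x = u0 := (hfnone x).mp this
        rw [hR] at hx'
        simp [hxu] at hx'
      · exfalso
        have : f y = none := by rw [← hxy]; simp [f, hx, hx']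
        have hyu : y = u0 := (hfnone y).mp this
        rw [hR] at hy'
        simp [hyu] at hy'
      · have hxu : x = u0 := (hfnone x).mp (by simp [f, hx, hx'])
        have hyu : y = u0 := (hfnone y).mp (by simp [f, hy, hy'])
        rw [hxu, hyu]
  have hbij : Function.Bijective f :=
    (Fintype.bijective_iff_injective_and_card f).mpr
      ⟨hinj, by rw [hV, Fintype.card_option, Fintype.card_fin]; omega⟩
  refine ⟨⟨Equiv.ofBijective f hbij, ?_⟩⟩
  intro x y
  show (Knk n k).Adj (f x) (f y) ↔ G.Adj x y
  rw [Knk_adj, hAdj]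
  constructor
  · rintro ⟨hne, h1, h2⟩
    refine ⟨fun h => hne (by rw [h]), ?_, ?_⟩
    · rintro ⟨rfl, hyB⟩
      obtain ⟨a, ha1, ha2⟩ := (hfB y).mpr hyB
      exact h1 ⟨hfu0, a, ha1, ha2⟩
    · rintro ⟨rfl, hxB⟩
      obtain ⟨a, ha1, ha2⟩ := (hfB x).mpr hxB
      exact h2 ⟨hfu0, a, ha1, ha2⟩
  · rintro ⟨hne, h1, h2⟩
    refine ⟨fun h => hne (hinj h), ?_, ?_⟩
    · rintro ⟨hxn, ha⟩
      exact h1 ⟨(hfnone x).mp hxn, (hfB y).mp ha⟩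
    · rintro ⟨hyn, ha⟩
      exact h2 ⟨(hfnone y).mp hyn, (hfB x).mp ha⟩

lemma equality_case {V : Type*} [Fintype V] [DecidableEq V] (n k : ℕ) (hk : 1 ≤ k)
    (hkn : k ≤ n-2) (G : SimpleGraph V) [DecidableRel G.Adj] (hV : Fintype.card V = n)
    (S A B : Finset V)
    (hABdisj : Disjoint A B) (hASdisj : Disjoint A S) (hBSdisj : Disjoint B S)
    (hunion : A ∪ B ∪ S = Finset.univ)
    (hedge : ∀ x ∈ A, ∀ y ∈ B, ¬ G.Adj x y)
    (hAcard : A.card = 1) (hBcard : B.card = n-1-k)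
    (hSdeg : ∀ v ∈ S, G.degree v = n-1) (hAdeg : ∀ v ∈ A, G.degree v = k)
    (hBdeg : ∀ v ∈ B, G.degree v = n-2) :
    Nonempty (G ≃g Knk n k) := by
  have hn : 3 ≤ n := by omega
  obtain ⟨u0, hA⟩ := Finset.card_eq_one.mp hAcard
  have hu0A : u0 ∈ A := by rw [hA]; exact Finset.mem_singleton_self u0
  have hu0B : u0 ∉ B := fun h => (Finset.disjoint_left.mp hABdisj hu0A) h
  -- S-vertices are adjacent to everything else
  have hSall : ∀ v ∈ S, ∀ y, y ≠ v → G.Adj v y := by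
    intro v hv y hy
    have hsub : G.neighborFinset v ⊆ Finset.univ.erase v := by
      intro z hz
      rw [SimpleGraph.mem_neighborFinset] at hz
      exact Finset.mem_erase.mpr ⟨hz.ne', Finset.mem_univ z⟩
    have hcard : (Finset.univ.erase v).card ≤ (G.neighborFinset v).card := by
      rw [SimpleGraph.card_neighborFinset_eq_degree, hSdeg v hv,
        Finset.card_erase_of_mem (Finset.mem_univ v), Finset.card_univ, hV]
    have heq := Finset.eq_of_subset_of_card_le hsub hcard
    have : y ∈ G.neighborFinset v := by
      rw [heq]
      exact Finset.mem_erase.mpr ⟨hy, Finset.mem_univ y⟩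
    exact (SimpleGraph.mem_neighborFinset _ _ _).mp this
  -- B-vertices are adjacent to everything except u0 (and themselves)
  have hBall : ∀ v ∈ B, ∀ y, y ≠ v → y ≠ u0 → G.Adj v y := by
    intro v hv y hy hyu
    have hvu : v ≠ u0 := fun h => hu0B (h ▸ hv)
    have hsub : G.neighborFinset v ⊆ (Finset.univ.erase v).erase u0 := by
      intro z hz
      rw [SimpleGraph.mem_neighborFinset] at hz
      refine Finset.mem_erase.mpr ⟨fun h => ?_, Finset.mem_erase.mpr ⟨hz.ne', Finset.mem_univ z⟩⟩
      exact hedge u0 hu0A v hv ((h ▸ hz).symm)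
    have hcard : ((Finset.univ.erase v).erase u0).card ≤ (G.neighborFinset v).card := by
      rw [SimpleGraph.card_neighborFinset_eq_degree, hBdeg v hv,
        Finset.card_erase_of_mem
          (Finset.mem_erase.mpr ⟨Ne.symm hvu, Finset.mem_univ u0⟩),
        Finset.card_erase_of_mem (Finset.mem_univ v), Finset.card_univ, hV]
      omega
    have heq := Finset.eq_of_subset_of_card_le hsub hcard
    have : y ∈ G.neighborFinset v := by
      rw [heq]
      exact Finset.mem_erase.mpr ⟨hyu, Finset.mem_erase.mpr ⟨hy, Finset.mem_univ y⟩⟩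
    exact (SimpleGraph.mem_neighborFinset _ _ _).mp this
  have hchar : ∀ x y, G.Adj x y ↔ (x ≠ y ∧ ¬(x = u0 ∧ y ∈ B) ∧ ¬(y = u0 ∧ x ∈ B)) := by
    intro x y
    constructor
    · intro hadj
      refine ⟨hadj.ne, ?_, ?_⟩
      · rintro ⟨rfl, hyB⟩
        exact hedge x hu0A y hyB hadj
      · rintro ⟨rfl, hxB⟩
        exact hedge y hu0A x hxB hadj.symm
    · rintro ⟨hne, h1, h2⟩
      have hx : x ∈ A ∪ B ∪ S := hunion ▸ Finset.mem_univ x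
      rcases Finset.mem_union.mp hx with hx' | hxS
      · rcases Finset.mem_union.mp hx' with hxA | hxB
        · have hxu : x = u0 := by rw [hA] at hxA; exact Finset.mem_singleton.mp hxA
          have hyB : y ∉ B := fun h => h1 ⟨hxu, h⟩
          have hy : y ∈ A ∪ B ∪ S := hunion ▸ Finset.mem_univ y
          rcases Finset.mem_union.mp hy with hy' | hyS
          · rcases Finset.mem_union.mp hy' with hyA | hyB'
            · exfalso
              rw [hA] at hyA
              exact hne (hxu.trans (Finset.mem_singleton.mp hyA).symm)
            · exact absurd hyB' hyB
          · exact (hSall y hyS x hne).symm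
        · have hyu : y ≠ u0 := fun h => h2 ⟨h, hxB⟩
          exact hBall x hxB y hne.symm hyu
      · exact hSall x hxS y hne.symm
  exact iso_of_char n k hk hkn G hV u0 B hu0B hBcard hchar


lemma exists_partition {V : Type*} [Fintype V] [DecidableEq V] (n k : ℕ)
    (hk : 1 ≤ k) (hkn : k ≤ n-2) (G : SimpleGraph V) (hV : Fintype.card V = n)
    (hcut : ∃ S : Finset V, S.card ≤ k ∧ ¬ (G.induce ((S : Set V)ᶜ)).Connected) :
    ∃ (S A B : Finset V), S.card = k ∧ A.Nonempty ∧ B.Nonempty ∧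
      Disjoint A B ∧ Disjoint A S ∧ Disjoint B S ∧ (A ∪ B ∪ S = Finset.univ) ∧
      (∀ x ∈ A, ∀ y ∈ B, ¬ G.Adj x y) := by
  classical
  have hn : 3 ≤ n := by omega
  obtain ⟨S0, hS0k, hS0nc⟩ := hcut
  set s : Set V := ((S0 : Set V))ᶜ with hs
  have hmem : ∀ x : V, x ∈ s ↔ x ∉ S0 := by intro x; simp [hs]
  -- the induced graph is nonempty
  have hcompl_card : (S0ᶜ : Finset V).card = n - S0.card := by
    rw [Finset.card_compl, hV]
  have hcompl_ne : (S0ᶜ : Finset V).Nonempty := by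
    rw [← Finset.card_pos, hcompl_card]; omega
  have hsne : Nonempty ↑s := by
    obtain ⟨v, hv⟩ := hcompl_ne
    exact ⟨⟨v, (hmem v).mpr (Finset.mem_compl.mp hv)⟩⟩
  have hnotpre : ¬ (G.induce s).Preconnected := by
    intro hpre
    exact hS0nc ((SimpleGraph.connected_iff _).mpr ⟨hpre, hsne⟩)
  rw [SimpleGraph.Preconnected] at hnotpre
  push_neg at hnotpre
  obtain ⟨u, w, hnr⟩ := hnotpre
  -- A0 : reachable part, B0 : the rest
  set p : V → Prop := fun x => ∃ hx : x ∈ s, (G.induce s).Reachable u ⟨x, hx⟩ with hp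
  set A0 : Finset V := S0ᶜ.filter p with hA0
  set B0 : Finset V := S0ᶜ.filter (fun x => ¬ p x) with hB0
  have hu : ↑u ∈ A0 := by
    rw [hA0, Finset.mem_filter]
    exact ⟨Finset.mem_compl.mpr ((hmem u).mp u.2), u.2, by exact SimpleGraph.Reachable.refl _⟩
  have hw : ↑w ∈ B0 := by
    rw [hB0, Finset.mem_filter]
    refine ⟨Finset.mem_compl.mpr ((hmem w).mp w.2), ?_⟩
    rintro ⟨hx, hr⟩
    exact hnr (by convert hr using 2)
  have hedge0 : ∀ x ∈ A0, ∀ y ∈ B0, ¬ G.Adj x y := by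
    rintro x hx y hy hadj
    rw [hA0, Finset.mem_filter] at hx
    rw [hB0, Finset.mem_filter] at hy
    obtain ⟨hx1, hx2, hx3⟩ := hx
    obtain ⟨hy1, hy2⟩ := hy
    have hys : y ∈ s := (hmem y).mpr (Finset.mem_compl.mp hy1)
    apply hy2
    refine ⟨hys, hx3.trans (SimpleGraph.Adj.reachable ?_)⟩
    show (G.induce s).Adj ⟨x, hx2⟩ ⟨y, hys⟩
    simp [SimpleGraph.comap_adj, hadj]
  have hAB0 : A0 ∪ B0 = S0ᶜ := by
    rw [hA0, hB0, Finset.filter_union_filter_not_eq]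
  have hdisj0 : Disjoint A0 B0 := by
    rw [hA0, hB0]
    exact Finset.disjoint_filter_filter_not _ _ _
  -- enlarge S0 to exact size k
  have hcard0 : A0.card + B0.card = n - S0.card := by
    rw [← Finset.card_union_of_disjoint hdisj0, hAB0, hcompl_card]
  set C : Finset V := (A0 ∪ B0) \ {↑u, ↑w} with hC
  have hCcard : k - S0.card ≤ C.card := by
    have hpair : ({(↑u : V), ↑w} : Finset V).card ≤ 2 :=
      (Finset.card_insert_le _ _).trans (by simp)
    have h2 : (A0 ∪ B0).card ≤ C.card + ({(↑u : V), ↑w} : Finset V).card := by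
      rw [hC]
      exact Finset.card_le_card_sdiff_add_card
    have h3 : (A0 ∪ B0).card = A0.card + B0.card := Finset.card_union_of_disjoint hdisj0
    omega
  obtain ⟨T, hTC, hTcard⟩ := Finset.exists_subset_card_eq hCcard
  have hTs : T ⊆ S0ᶜ := fun x hx => by
    have := hTC hx
    rw [hC, Finset.mem_sdiff, hAB0] at this
    exact this.1
  refine ⟨S0 ∪ T, A0 \ T, B0 \ T, ?_, ?_, ?_, ?_, ?_, ?_, ?_, ?_⟩
  · rw [Finset.card_union_of_disjoint, hTcard]
    · omega
    · exact Finset.disjoint_left.mpr (fun x hx hxT => Finset.mem_compl.mp (hTs hxT) hx)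
  · refine ⟨↑u, Finset.mem_sdiff.mpr ⟨hu, fun hT => ?_⟩⟩
    have := hTC hT
    rw [hC, Finset.mem_sdiff] at this
    exact this.2 (by simp)
  · refine ⟨↑w, Finset.mem_sdiff.mpr ⟨hw, fun hT => ?_⟩⟩
    have := hTC hT
    rw [hC, Finset.mem_sdiff] at this
    exact this.2 (by simp)
  · exact Finset.disjoint_of_subset_left Finset.sdiff_subset
      (Finset.disjoint_of_subset_right Finset.sdiff_subset hdisj0)
  · rw [Finset.disjoint_union_right]
    constructor
    · refine Finset.disjoint_left.mpr (fun x hx hxS => ?_)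
      have := (Finset.mem_sdiff.mp hx).1
      rw [hA0, Finset.mem_filter] at this
      exact Finset.mem_compl.mp this.1 hxS
    · exact Finset.disjoint_left.mpr (fun x hx hxT => (Finset.mem_sdiff.mp hx).2 hxT)
  · rw [Finset.disjoint_union_right]
    constructor
    · refine Finset.disjoint_left.mpr (fun x hx hxS => ?_)
      have := (Finset.mem_sdiff.mp hx).1
      rw [hB0, Finset.mem_filter] at this
      exact Finset.mem_compl.mp this.1 hxS
    · exact Finset.disjoint_left.mpr (fun x hx hxT => (Finset.mem_sdiff.mp hx).2 hxT)
  · ext x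
    simp only [Finset.mem_union, Finset.mem_sdiff, Finset.mem_univ, iff_true]
    by_cases hxS : x ∈ S0
    · tauto
    · have : x ∈ A0 ∪ B0 := by rw [hAB0]; exact Finset.mem_compl.mpr hxS
      rw [Finset.mem_union] at this
      by_cases hxT : x ∈ T <;> tauto
  · intro x hx y hy
    exact hedge0 x (Finset.mem_sdiff.mp hx).1 y (Finset.mem_sdiff.mp hy).1


/-- **Theorem 1 for `Π₂` (Wang).** If `1 ≤ k ≤ n - 2` and `G` is a connected
graph on `n` vertices having a vertex cut of size at most `k`, then
`Π₂(G) ≤ k^k (n-1)^{k(n-1)} (n-2)^{(n-2)(n-k-1)}`, with equality iff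
`G ≅ K_n^k`. -/
theorem multZagreb2_le_of_vertexCut {V : Type*} [Fintype V] (n k : ℕ)
    (hk : 1 ≤ k) (hkn : k ≤ n - 2)
    (G : SimpleGraph V) (hV : Fintype.card V = n) (hG : G.Connected)
    (hcut : ∃ S : Finset V, S.card ≤ k ∧ ¬ (G.induce ((S : Set V)ᶜ)).Connected) :
    multZagreb2 G ≤
        k ^ k * (n - 1) ^ (k * (n - 1)) * (n - 2) ^ ((n - 2) * (n - k - 1)) ∧
      (multZagreb2 G =
          k ^ k * (n - 1) ^ (k * (n - 1)) * (n - 2) ^ ((n - 2) * (n - k - 1)) ↔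
        Nonempty (G ≃g Knk n k)) := by
  classical
  have hn : 3 ≤ n := by omega
  letI : DecidableRel G.Adj := Classical.decRel G.Adj
  have hMZ : multZagreb2 G = ∏ v : V, (G.degree v) ^ (G.degree v) := rfl
  obtain ⟨S, A, B, hScard, hAne, hBne, hABdisj, hASdisj, hBSdisj, hunion, hedge⟩ :=
    exists_partition n k hk hkn G hV hcut
  obtain ⟨a', ha'⟩ : ∃ a', A.card = a' + 1 :=
    ⟨A.card - 1, by have := Finset.card_pos.mpr hAne; omega⟩
  obtain ⟨b', hb'⟩ : ∃ b', B.card = b' + 1 :=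
    ⟨B.card - 1, by have := Finset.card_pos.mpr hBne; omega⟩
  have hABS : Disjoint (A ∪ B) S := Finset.disjoint_union_left.mpr ⟨hASdisj, hBSdisj⟩
  have hsum : A.card + B.card + S.card = n := by
    have h1 : (A ∪ B ∪ S).card = n := by rw [hunion, Finset.card_univ, hV]
    rw [Finset.card_union_of_disjoint hABS, Finset.card_union_of_disjoint hABdisj] at h1
    omega
  have hab : a' + b' = n - k - 2 := by omega
  have hdeg1 : ∀ v, 1 ≤ G.degree v := by
    intro v
    obtain ⟨w, hw⟩ := Fintype.exists_ne_of_one_lt_card (by omega) v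
    obtain ⟨p⟩ := hG.preconnected v w
    cases p with
    | nil => exact absurd rfl hw.symm
    | cons h _ => exact (G.degree_pos_iff_exists_adj v).mpr ⟨_, h⟩
  have hdegall : ∀ v, G.degree v ≤ n - 1 := by
    intro v
    have := G.degree_lt_card_verts v
    omega
  have hdegA : ∀ v ∈ A, G.degree v ≤ k + a' := by
    intro v hv
    have hsub : G.neighborFinset v ⊆ (A.erase v) ∪ S := by
      intro y hy
      rw [SimpleGraph.mem_neighborFinset] at hy
      have hy' : y ∈ A ∪ B ∪ S := hunion ▸ Finset.mem_univ y
      rcases Finset.mem_union.mp hy' with h' | hS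
      · rcases Finset.mem_union.mp h' with hA | hB
        · exact Finset.mem_union_left _ (Finset.mem_erase.mpr ⟨hy.ne', hA⟩)
        · exact absurd hy (hedge v hv y hB)
      · exact Finset.mem_union_right _ hS
    calc G.degree v = (G.neighborFinset v).card :=
          (SimpleGraph.card_neighborFinset_eq_degree _ _).symm
      _ ≤ ((A.erase v) ∪ S).card := Finset.card_le_card hsub
      _ ≤ (A.erase v).card + S.card := Finset.card_union_le _ _
      _ ≤ k + a' := by rw [Finset.card_erase_of_mem hv, ha', hScard]; omega
  have hdegB : ∀ v ∈ B, G.degree v ≤ k + b' := by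
    intro v hv
    have hsub : G.neighborFinset v ⊆ (B.erase v) ∪ S := by
      intro y hy
      rw [SimpleGraph.mem_neighborFinset] at hy
      have hy' : y ∈ A ∪ B ∪ S := hunion ▸ Finset.mem_univ y
      rcases Finset.mem_union.mp hy' with h' | hS
      · rcases Finset.mem_union.mp h' with hA | hB
        · exact absurd hy.symm (hedge y hA v hv)
        · exact Finset.mem_union_left _ (Finset.mem_erase.mpr ⟨hy.ne', hB⟩)
      · exact Finset.mem_union_right _ hS
    calc G.degree v = (G.neighborFinset v).card :=
          (SimpleGraph.card_neighborFinset_eq_degree _ _).symm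
      _ ≤ ((B.erase v) ∪ S).card := Finset.card_le_card hsub
      _ ≤ (B.erase v).card + S.card := Finset.card_union_le _ _
      _ ≤ k + b' := by rw [Finset.card_erase_of_mem hv, hb', hScard]; omega
  set PA := ∏ v ∈ A, (G.degree v) ^ (G.degree v) with hPAdef
  set PB := ∏ v ∈ B, (G.degree v) ^ (G.degree v) with hPBdef
  set PS := ∏ v ∈ S, (G.degree v) ^ (G.degree v) with hPSdef
  have hsplit : multZagreb2 G = PA * PB * PS := by
    rw [hMZ, ← hunion, Finset.prod_union hABS, Finset.prod_union hABdisj]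
  have hPAle : PA ≤ gfun k a' := by
    calc PA ≤ ∏ v ∈ A, (k + a') ^ (k + a') :=
        Finset.prod_le_prod (fun i _ => Nat.zero_le _) (fun i hi => xx_mono (hdegA i hi))
      _ = gfun k a' := by rw [Finset.prod_const, ha', gfun, pow_mul]
  have hPBle : PB ≤ gfun k b' := by
    calc PB ≤ ∏ v ∈ B, (k + b') ^ (k + b') :=
        Finset.prod_le_prod (fun i _ => Nat.zero_le _) (fun i hi => xx_mono (hdegB i hi))
      _ = gfun k b' := by rw [Finset.prod_const, hb', gfun, pow_mul]
  have hPSle : PS ≤ (n-1) ^ ((n-1) * k) := by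
    calc PS ≤ ∏ v ∈ S, (n-1) ^ (n-1) :=
        Finset.prod_le_prod (fun i _ => Nat.zero_le _) (fun i hi => xx_mono (hdegall i))
      _ = (n-1) ^ ((n-1) * k) := by rw [Finset.prod_const, hScard, ← pow_mul]
  have hTeq : gfun k 0 * gfun k (a' + b') * (n-1) ^ ((n-1) * k)
      = k ^ k * (n - 1) ^ (k * (n - 1)) * (n - 2) ^ ((n - 2) * (n - k - 1)) := by
    have h0 : gfun k 0 = k ^ k := by simp [gfun]
    have h1 : gfun k (a' + b') = (n-2) ^ ((n-2) * (n-k-1)) := by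
      rw [gfun]
      have e1 : k + (a' + b') = n - 2 := by omega
      have e2 : (a' + b') + 1 = n - k - 1 := by omega
      rw [e1, e2]
    rw [h0, h1, Nat.mul_comm (n-1) k]
    ring
  have hmid : PA * PB * PS ≤ gfun k a' * gfun k b' * ((n-1) ^ ((n-1) * k)) :=
    Nat.mul_le_mul (Nat.mul_le_mul hPAle hPBle) hPSle
  have hend : gfun k a' * gfun k b' * ((n-1) ^ ((n-1) * k))
      ≤ gfun k 0 * gfun k (a' + b') * ((n-1) ^ ((n-1) * k)) :=
    Nat.mul_le_mul (gfun_le k a' b' hk) (le_refl _)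
  have hineq : multZagreb2 G ≤
      k ^ k * (n - 1) ^ (k * (n - 1)) * (n - 2) ^ ((n - 2) * (n - k - 1)) := by
    rw [hsplit, ← hTeq]
    exact le_trans hmid hend
  refine ⟨hineq, ?_, ?_⟩
  · -- equality implies isomorphism
    intro heq
    have hPApos : 0 < PA := Finset.prod_pos (fun i _ => pow_self_pos _)
    have hPBpos : 0 < PB := Finset.prod_pos (fun i _ => pow_self_pos _)
    have hPSpos : 0 < PS := Finset.prod_pos (fun i _ => pow_self_pos _)
    have hXT : PA * PB * PS
        = k ^ k * (n - 1) ^ (k * (n - 1)) * (n - 2) ^ ((n - 2) * (n - k - 1)) := by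
      rw [← hsplit]; exact heq
    have hY1 : gfun k a' * gfun k b' * ((n-1) ^ ((n-1) * k))
        = k ^ k * (n - 1) ^ (k * (n - 1)) * (n - 2) ^ ((n - 2) * (n - k - 1)) :=
      le_antisymm (by rw [← hTeq]; exact hend) (by rw [← hXT]; exact hmid)
    have hzero : a' = 0 ∨ b' = 0 := by
      by_contra hc
      push_neg at hc
      have hlt := gfun_lt k a' b' hk (by omega) (by omega)
      have hpS : 0 < (n-1) ^ ((n-1) * k) := pow_pos (by omega) _
      have : gfun k a' * gfun k b' * ((n-1) ^ ((n-1) * k))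
          < gfun k 0 * gfun k (a' + b') * ((n-1) ^ ((n-1) * k)) :=
        Nat.mul_lt_mul_of_pos_right hlt hpS
      rw [hY1, ← hTeq] at this
      exact lt_irrefl _ this
    have hfac := triple_eq hPAle hPBle hPSle hPApos hPBpos hPSpos (hXT.trans hY1.symm)
    obtain ⟨hfA, hfB, hfS⟩ := hfac
    -- per-vertex degree equalities
    have hSdeg : ∀ v ∈ S, G.degree v = n - 1 := by
      intro v hv
      have hper := prod_factors_eq_of_prod_eq
        (f := fun v => (G.degree v) ^ (G.degree v)) (g := fun _ => (n-1) ^ (n-1))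
        (fun i _ => xx_mono (hdegall i)) (fun i _ => pow_self_pos _)
        (by rw [← hPSdef, Finset.prod_const, hScard, ← pow_mul, hfS]) v hv
      exact xx_inj (hdeg1 v) (hdegall v) hper
    have hAdeg : ∀ v ∈ A, G.degree v = k + a' := by
      intro v hv
      have hper := prod_factors_eq_of_prod_eq
        (f := fun v => (G.degree v) ^ (G.degree v)) (g := fun _ => (k + a') ^ (k + a'))
        (fun i hi => xx_mono (hdegA i hi)) (fun i _ => pow_self_pos _)
        (by rw [← hPAdef, Finset.prod_const, ha', hfA, gfun, pow_mul]) v hv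
      exact xx_inj (hdeg1 v) (hdegA v hv) hper
    have hBdeg : ∀ v ∈ B, G.degree v = k + b' := by
      intro v hv
      have hper := prod_factors_eq_of_prod_eq
        (f := fun v => (G.degree v) ^ (G.degree v)) (g := fun _ => (k + b') ^ (k + b'))
        (fun i hi => xx_mono (hdegB i hi)) (fun i _ => pow_self_pos _)
        (by rw [← hPBdef, Finset.prod_const, hb', hfB, gfun, pow_mul]) v hv
      exact xx_inj (hdeg1 v) (hdegB v hv) hper
    rcases hzero with hz | hz
    · -- a' = 0 : A is the singleton side
      subst hz
      refine equality_case n k hk hkn G hV S A B hABdisj hASdisj hBSdisj hunion hedge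
        (by omega) (by omega) hSdeg ?_ ?_
      · intro v hv; rw [hAdeg v hv]; omega
      · intro v hv; rw [hBdeg v hv]; omega
    · -- b' = 0 : B is the singleton side, swap roles
      subst hz
      have hunion' : B ∪ A ∪ S = Finset.univ := by
        rw [Finset.union_comm B A]; exact hunion
      have hedge' : ∀ x ∈ B, ∀ y ∈ A, ¬ G.Adj x y := by
        intro x hx y hy hadj
        exact hedge y hy x hx hadj.symm
      refine equality_case n k hk hkn G hV S B A hABdisj.symm hBSdisj hASdisj hunion' hedge'
        (by omega) (by omega) hSdeg ?_ ?_
      · intro v hv; rw [hBdeg v hv]; omega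
      · intro v hv; rw [hAdeg v hv]; omega
  · rintro ⟨e⟩
    rw [multZagreb2_eq_of_iso e, multZagreb2_Knk n k hk hkn]
end
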